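/- arXiv:0904.4573 — 5 statements merged into one kernel-verified Lean document; each statement's English description precedes it below -/
import Mathlib

section
/- Let F be a field and let P ∈ F[x₁,…,xₙ] be a polynomial. Suppose the total degree of P equals k₁ + k₂ + ⋯ + kₙ, where each kᵢ is a non-negative integer, and suppose the coefficient of the monomial x₁^{k₁} x₂^{k₂} ⋯ xₙ^{kₙ} in P is non-zero. Then for any finite subsets A₁,…,Aₙ of F with |Aᵢ| ≥ kᵢ + 1 for all i = 1,…,n, there exist elements a₁ ∈ A₁, …, aₙ ∈ Aₙ such that P(a₁,…,aₙ) ≠ 0. -/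
open MvPolynomial Finsupp

private lemma cn_totalDegree_X_mul_eq {F : Type*} [Field F] {n : ℕ}
    {Q : MvPolynomial (Fin n) F} (i : Fin n) (hQ : Q ≠ 0) :
    (X i * Q).totalDegree = Q.totalDegree + 1 := by
  have hs : (X i * Q).support = Q.support.map (addLeftEmbedding (Finsupp.single i 1)) :=
    support_X_mul i Q
  unfold totalDegree
  rw [hs, Finset.sup_map]
  have hne : Q.support.Nonempty := by
    simpa [MvPolynomial.support_eq_empty] using hQ
  apply le_antisymm
  · refine Finset.sup_le fun d hd => ?_
    simp only [Function.comp_apply, addLeftEmbedding_apply]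
    rw [Finsupp.sum_add_index (by simp) (by simp)]
    have : (Finsupp.single i 1).sum (fun _ e => e) = 1 := by simp
    rw [this, add_comm]
    exact Nat.add_le_add_right (Finset.le_sup (f := fun s => s.sum fun _ e => e) hd) 1
  · obtain ⟨d, hd, hdeq⟩ := Finset.exists_mem_eq_sup _ hne (fun s : Fin n →₀ ℕ => s.sum fun _ e => e)
    rw [hdeq]
    refine le_trans (le_of_eq ?_) (Finset.le_sup (f := (fun s : Fin n →₀ ℕ => s.sum fun _ e => e) ∘ addLeftEmbedding (Finsupp.single i 1)) hd)
    simp only [Function.comp_apply, addLeftEmbedding_apply]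
    rw [Finsupp.sum_add_index (by simp) (by simp)]
    simp [add_comm]

private lemma cn_aux {F : Type*} [Field F] {n : ℕ} (N : ℕ) :
    ∀ (P : MvPolynomial (Fin n) F) (k : Fin n → ℕ), (∑ i, k i) = N →
      P.totalDegree = ∑ i, k i →
      MvPolynomial.coeff (Finsupp.equivFunOnFinite.symm k) P ≠ 0 →
      ∀ (A : Fin n → Finset F), (∀ i, k i + 1 ≤ (A i).card) →
      ∃ a : Fin n → F, (∀ i, a i ∈ A i) ∧ MvPolynomial.eval a P ≠ 0 := by
  induction N using Nat.strong_induction_on with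
  | _ N IH =>
  intro P k hNk hdeg hcoeff A hA
  classical
  rcases Nat.eq_zero_or_pos N with hN0 | hNpos
  · -- base case: N = 0, so every k i = 0 and P is a nonzero constant
    set κ : Fin n →₀ ℕ := Finsupp.equivFunOnFinite.symm k with hκdef
    have hκapp : ∀ j, κ j = k j := fun j => rfl
    have hk0 : ∀ j, k j = 0 := by
      intro j
      have := Finset.sum_eq_zero_iff.mp (hNk.trans hN0)
      exact this j (Finset.mem_univ j)
    have hκ0 : κ = 0 := by ext j; simp [hκapp, hk0]
    have hne : ∀ j, ∃ x, x ∈ A j := by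
      intro j
      have := hA j
      rw [hk0 j] at this
      exact Finset.card_pos.mp (by omega)
    choose a ha using hne
    refine ⟨a, ha, ?_⟩
    have hPC : P = C (MvPolynomial.coeff 0 P) := by
      ext m
      rcases eq_or_ne m 0 with rfl | hm
      · simp
      · rw [MvPolynomial.coeff_C, if_neg (Ne.symm hm)]
        by_contra hc
        have hms : m ∈ P.support := MvPolynomial.mem_support_iff.mpr hc
        have hle := MvPolynomial.le_totalDegree hms
        rw [hdeg, hNk, hN0, Nat.le_zero] at hle
        apply hm
        have hsum0 : (∑ j, m j) = 0 := by
          rw [← Finsupp.sum_fintype m (fun _ e => e) (fun _ => rfl)]; exact hle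
        ext j
        simpa using Finset.sum_eq_zero_iff.mp hsum0 j (Finset.mem_univ j)
    rw [hPC]
    simp only [MvPolynomial.eval_C]
    rw [hκ0] at hcoeff
    exact hcoeff
  · set κ : Fin n →₀ ℕ := Finsupp.equivFunOnFinite.symm k with hκdef
    have hκapp : ∀ j, κ j = k j := fun j => rfl
    have hκsum : (κ.sum fun _ e => e) = N := by
      rw [Finsupp.sum_fintype _ _ (fun _ => rfl)]; simpa [hκapp] using hNk
    by_contra hcon
    push_neg at hcon
    -- pick i with k i > 0 and a ∈ A i
    obtain ⟨i, hki⟩ : ∃ i, 0 < k i := by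
      by_contra h
      push_neg at h
      have : (∑ i, k i) = 0 := Finset.sum_eq_zero fun j _ => Nat.le_zero.mp (h j)
      omega
    obtain ⟨a, ha⟩ : ∃ a, a ∈ A i := Finset.card_pos.mp (by have := hA i; omega)
    set g : Fin n → MvPolynomial (Fin n) F := fun j => if j = i then C a else X j with hg
    set R : MvPolynomial (Fin n) F := MvPolynomial.aeval g P with hR
    -- divisibility
    have hdvd : (X i - C a : MvPolynomial (Fin n) F) ∣ P - R := by
      rw [← Ideal.mem_span_singleton]
      set I := Ideal.span {(X i - C a : MvPolynomial (Fin n) F)}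
      have hmem : (X i - C a : MvPolynomial (Fin n) F) ∈ I := Ideal.subset_span rfl
      have hkey : (Ideal.Quotient.mkₐ F I).comp (MvPolynomial.aeval g) = Ideal.Quotient.mkₐ F I := by
        apply MvPolynomial.algHom_ext
        intro j
        simp only [AlgHom.comp_apply, MvPolynomial.aeval_X, Ideal.Quotient.mkₐ_eq_mk, hg]
        by_cases hj : j = i
        · subst hj
          rw [if_pos rfl, eq_comm, Ideal.Quotient.eq]
          exact hmem
        · rw [if_neg hj]
      have hPR : Ideal.Quotient.mk I R = Ideal.Quotient.mk I P := by
        have := congrArg (fun φ => φ P) hkey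
        simp only [AlgHom.comp_apply, Ideal.Quotient.mkₐ_eq_mk] at this
        exact this
      exact Ideal.Quotient.eq.mp hPR.symm
    obtain ⟨Q, hQ⟩ := hdvd
    have hP : P = (X i - C a) * Q + R := by rw [← hQ]; ring
    -- product formula for monomials of R
    have hprod : ∀ d : Fin n →₀ ℕ, (∏ j, g j ^ d j) =
        C (a ^ d i) * MvPolynomial.monomial (Finsupp.erase i d) 1 := by
      intro d
      rw [← Finset.mul_prod_erase Finset.univ _ (Finset.mem_univ i)]
      have h1 : g i ^ d i = C (a ^ d i) := by simp [hg]
      have h2 : (∏ j ∈ Finset.univ.erase i, g j ^ d j) =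
          MvPolynomial.monomial (Finsupp.erase i d) 1 := by
        rw [MvPolynomial.monomial_eq, map_one, one_mul]
        rw [Finsupp.prod_fintype _ _ (fun _ => pow_zero _)]
        rw [← Finset.prod_erase (h := by rw [Finsupp.erase_same, pow_zero]) (s := Finset.univ) (a := i)]
        apply Finset.prod_congr rfl
        intro j hj
        have hji : j ≠ i := Finset.ne_of_mem_erase hj
        rw [hg]
        simp [hji, Finsupp.erase_ne hji]
      rw [h1, h2]
    -- R as explicit sum
    have hRsum : R = ∑ d ∈ P.support,
        C (MvPolynomial.coeff d P * a ^ d i) * MvPolynomial.monomial (Finsupp.erase i d) 1 := by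
      rw [hR, MvPolynomial.aeval_def, MvPolynomial.eval₂_eq]
      apply Finset.sum_congr rfl
      intro d _
      have hext : (∏ j ∈ d.support, g j ^ d j) = ∏ j, g j ^ d j := by
        refine Finset.prod_subset (Finset.subset_univ _) fun j _ hj => ?_
        rw [Finsupp.notMem_support_iff.mp hj, pow_zero]
      rw [hext, hprod d, map_mul]
      rw [MvPolynomial.algebraMap_eq]
      ring
    -- coeff κ R = 0
    have hRcoeff : MvPolynomial.coeff κ R = 0 := by
      rw [hRsum, MvPolynomial.coeff_sum]
      apply Finset.sum_eq_zero
      intro d _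
      rw [MvPolynomial.coeff_C_mul, MvPolynomial.coeff_monomial, if_neg, mul_zero]
      intro hc
      have : (Finsupp.erase i d) i = κ i := by rw [hc]
      rw [Finsupp.erase_same, hκapp] at this
      omega
    -- deg R ≤ N
    have hRdeg : R.totalDegree ≤ N := by
      rw [hRsum]
      refine le_trans (MvPolynomial.totalDegree_finset_sum _ _) (Finset.sup_le fun d hd => ?_)
      refine le_trans (MvPolynomial.totalDegree_mul _ _) ?_
      rw [MvPolynomial.totalDegree_C, zero_add]
      refine le_trans (MvPolynomial.totalDegree_monomial_le _ _) ?_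
      have h1 : ((Finsupp.erase i d).sum fun _ e => id e) ≤ d.sum fun _ e => e := by
        rw [Finsupp.sum_fintype _ _ (fun _ => rfl), Finsupp.sum_fintype _ _ (fun _ => rfl)]
        apply Finset.sum_le_sum
        intro j _
        by_cases hj : j = i
        · subst hj; simp
        · rw [Finsupp.erase_ne hj]; exact le_rfl
      exact le_trans h1 (le_trans (MvPolynomial.le_totalDegree hd) (by rw [hdeg, hNk]))
    -- Q is nonzero
    have hQne : Q ≠ 0 := by
      intro h
      rw [h, mul_zero] at hQ
      have : P = R := by linear_combination hQ
      rw [this, hRcoeff] at hcoeff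
      exact hcoeff rfl
    -- degree of (X i - C a) * Q
    have hmuldeg : ((X i - C a) * Q).totalDegree = Q.totalDegree + 1 := by
      have h1 : (X i * Q).totalDegree = Q.totalDegree + 1 := cn_totalDegree_X_mul_eq i hQne
      have h2 : (-(C a * Q)).totalDegree ≤ Q.totalDegree := by
        rw [MvPolynomial.totalDegree_neg]
        refine le_trans (MvPolynomial.totalDegree_mul _ _) ?_
        rw [MvPolynomial.totalDegree_C, zero_add]
      have h3 : (X i - C a) * Q = X i * Q + -(C a * Q) := by ring
      rw [h3, MvPolynomial.totalDegree_add_eq_left_of_totalDegree_lt (by omega), h1]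
    have hQdeg_lt : Q.totalDegree + 1 ≤ N := by
      rw [← hmuldeg]
      have : (X i - C a) * Q = P - R := hQ.symm
      rw [this]
      refine le_trans (MvPolynomial.totalDegree_sub _ _) ?_
      rw [max_le_iff]
      exact ⟨by rw [hdeg, hNk], hRdeg⟩
    -- coeff κ Q = 0
    have hQκ : MvPolynomial.coeff κ Q = 0 := by
      apply MvPolynomial.coeff_eq_zero_of_totalDegree_lt
      have : (∑ j ∈ κ.support, κ j) = N := hκsum
      omega
    -- the new exponent vector
    set k' : Fin n → ℕ := Function.update k i (k i - 1) with hk'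
    set κ' : Fin n →₀ ℕ := Finsupp.equivFunOnFinite.symm k' with hκ'def
    have hκ'app : ∀ j, κ' j = k' j := fun j => rfl
    have hsingle : Finsupp.single i 1 + κ' = κ := by
      ext j
      simp only [Finsupp.add_apply, Finsupp.single_apply, hκ'app, hκapp, hk', Function.update_apply]
      by_cases hj : j = i
      · subst hj; simp; omega
      · simp [hj, Ne.symm hj]
    -- coefficient transfer
    have hcoeffQ : MvPolynomial.coeff κ' Q = MvPolynomial.coeff κ P := by
      rw [hP, MvPolynomial.coeff_add, hRcoeff, add_zero]
      have : (X i - C a) * Q = X i * Q - C a * Q := by ring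
      rw [this, MvPolynomial.coeff_sub, MvPolynomial.coeff_C_mul, hQκ, mul_zero, sub_zero,
        ← hsingle, MvPolynomial.coeff_X_mul]
    have hcoeff' : MvPolynomial.coeff κ' Q ≠ 0 := by rw [hcoeffQ]; exact hcoeff
    -- sums for k'
    have hk'sum : (∑ j, k' j) = N - 1 := by
      have h1 : (∑ j, k' j) = (k i - 1) + ∑ j ∈ Finset.univ \ {i}, k j := by
        rw [hk']; exact Finset.sum_update_of_mem (Finset.mem_univ i) k (k i - 1)
      have h2 : (∑ j, k j) = k i + ∑ j ∈ Finset.univ \ {i}, k j := by rw [Finset.sdiff_singleton_eq_erase]; exact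
        (Finset.add_sum_erase _ k (Finset.mem_univ i)).symm
      omega
    have hκ'sum : (κ'.sum fun _ e => e) = N - 1 := by
      rw [Finsupp.sum_fintype _ _ (fun _ => rfl)]
      simpa [hκ'app] using hk'sum
    -- total degree of Q
    have hQdeg : Q.totalDegree = ∑ j, k' j := by
      rw [hk'sum]
      apply le_antisymm (by omega)
      have hmem : κ' ∈ Q.support := MvPolynomial.mem_support_iff.mpr hcoeff'
      have := MvPolynomial.le_totalDegree hmem
      omega
    -- new grid
    set A' : Fin n → Finset F := Function.update A i ((A i).erase a) with hA'
    have hA'card : ∀ j, k' j + 1 ≤ (A' j).card := by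
      intro j
      rw [hA', hk', Function.update_apply, Function.update_apply]
      by_cases hj : j = i
      · subst hj
        rw [if_pos rfl, if_pos rfl, Finset.card_erase_of_mem ha]
        have := hA j
        omega
      · rw [if_neg hj, if_neg hj]
        exact hA j
    obtain ⟨b, hb, hbQ⟩ := IH (N - 1) (by omega) Q k' hk'sum hQdeg hcoeff' A' hA'card
    have hbi : b i ∈ (A i).erase a := by
      have := hb i
      rwa [hA', Function.update_self] at this
    have hbA : ∀ j, b j ∈ A j := by
      intro j
      by_cases hj : j = i
      · subst hj; exact Finset.mem_of_mem_erase hbi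
      · have := hb j
        rwa [hA', Function.update_of_ne hj] at this
    have hbne : b i ≠ a := Finset.ne_of_mem_erase hbi
    -- evaluate
    have hevalP : MvPolynomial.eval b P = 0 := hcon b hbA
    have hevalR : MvPolynomial.eval b R = 0 := by
      have hcomp : (MvPolynomial.aeval b).comp (MvPolynomial.aeval g) =
          MvPolynomial.aeval (Function.update b i a) := by
        apply MvPolynomial.algHom_ext
        intro j
        simp only [AlgHom.comp_apply, MvPolynomial.aeval_X, hg, Function.update_apply]
        by_cases hj : j = i
        · subst hj; simp
        · simp [hj]
      have h1 : MvPolynomial.aeval b R = MvPolynomial.aeval (Function.update b i a) P := by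
        rw [hR, ← hcomp]; rfl
      have h2 : MvPolynomial.eval (Function.update b i a) P = 0 := by
        apply hcon
        intro j
        rw [Function.update_apply]
        by_cases hj : j = i
        · subst hj; simp [ha]
        · simp [hj, hbA j]
      have h3 : MvPolynomial.aeval b R = MvPolynomial.eval b R := by
        rw [MvPolynomial.aeval_def]; rfl
      have h4 : MvPolynomial.aeval (Function.update b i a) P =
          MvPolynomial.eval (Function.update b i a) P := by
        rw [MvPolynomial.aeval_def]; rfl
      rw [← h3, h1, h4, h2]
    have : (b i - a) * MvPolynomial.eval b Q = 0 := by
      have := hevalP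
      rw [hP] at this
      simp only [map_add, map_mul, map_sub, MvPolynomial.eval_X, MvPolynomial.eval_C,
        hevalR, add_zero] at this
      exact this
    rcases mul_eq_zero.mp this with h | h
    · exact hbne (sub_eq_zero.mp h)
    · exact hbQ h


/-- **Combinatorial Nullstellensatz** (Alon). Let `F` be a field and `P` a polynomial in
`F[x₁,…,xₙ]` whose total degree equals `k₁ + ⋯ + kₙ` and in which the coefficient of the
monomial `x₁^{k₁} ⋯ xₙ^{kₙ}` is nonzero. Then for any finite subsets `A₁,…,Aₙ` of `F` with
`|Aᵢ| ≥ kᵢ + 1`, there are `aᵢ ∈ Aᵢ` with `P(a₁,…,aₙ) ≠ 0`. -/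
theorem combinatorial_nullstellensatz_field
    {F : Type*} [Field F] {n : ℕ} (P : MvPolynomial (Fin n) F) (k : Fin n → ℕ)
    (hdeg : P.totalDegree = ∑ i, k i)
    (hcoeff : MvPolynomial.coeff (Finsupp.equivFunOnFinite.symm k) P ≠ 0)
    (A : Fin n → Finset F) (hA : ∀ i, k i + 1 ≤ (A i).card) :
    ∃ a : Fin n → F, (∀ i, a i ∈ A i) ∧ MvPolynomial.eval a P ≠ 0 :=
  cn_aux (∑ i, k i) P k rfl hdeg hcoeff A hA
end

section
/- Let R be an integral domain and let P ∈ R[x₁,…,xₙ] be a polynomial. Suppose the total degree of P equals k₁ + k₂ + ⋯ + kₙ, where each kᵢ is a non-negative integer, and suppose the coefficient of the monomial x₁^{k₁} x₂^{k₂} ⋯ xₙ^{kₙ} in P is non-zero. Then for any finite subsets A₁,…,Aₙ of R with |Aᵢ| ≥ kᵢ + 1 for all i = 1,…,n, there exist elements a₁ ∈ A₁, …, aₙ ∈ Aₙ such that P(a₁,…,aₙ) ≠ 0. -/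
open Polynomial Finset

lemma sum_pow_mul_nodalWeight {K : Type*} [Field K] [DecidableEq K] (A : Finset K) (m : ℕ)
    (hm : m < A.card) :
    ∑ x ∈ A, x ^ m * Lagrange.nodalWeight A id x
      = if m = A.card - 1 then 1 else 0 := by
  have hinj : Set.InjOn (id : K → K) A := Function.injective_id.injOn
  have h : Lagrange.interpolate A id (fun i => eval (id i) (X ^ m : K[X])) = (X ^ m : K[X]) :=
    Lagrange.eq_interpolate (f := (X ^ m : K[X])) hinj
      (by simpa [degree_X_pow] using (by exact_mod_cast (WithBot.coe_lt_coe.mpr hm) :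
        ((m : ℕ) : WithBot ℕ) < (A.card : WithBot ℕ))) |>.symm
  have hb : ∀ x ∈ A, (Lagrange.basis A id x).coeff (A.card - 1)
      = Lagrange.nodalWeight A id x := by
    intro x hx
    have hbe : Lagrange.basis A id x
        = C (Lagrange.nodalWeight A id x) * Lagrange.nodal (A.erase x) id := by
      simp_rw [Lagrange.basis, Lagrange.basisDivisor, Lagrange.nodalWeight, prod_mul_distrib,
        map_prod, Lagrange.nodal]
    have hnd : (Lagrange.nodal (A.erase x) id).natDegree = A.card - 1 := by
      rw [Lagrange.natDegree_nodal, card_erase_of_mem hx]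
    rw [hbe, coeff_C_mul, ← hnd, (Lagrange.nodal_monic).coeff_natDegree, mul_one]
  have h2 := congrArg (fun p : K[X] => p.coeff (A.card - 1)) h
  simp only [coeff_X_pow, Lagrange.interpolate_apply, finset_sum_coeff, coeff_C_mul,
    eval_pow, eval_X, id_eq] at h2
  calc ∑ x ∈ A, x ^ m * Lagrange.nodalWeight A id x
      = ∑ x ∈ A, x ^ m * (Lagrange.basis A id x).coeff (A.card - 1) :=
        Finset.sum_congr rfl fun x hx => by rw [hb x hx]
    _ = if m = A.card - 1 then 1 else 0 := by rw [h2]; simp [eq_comm]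

lemma grid_coeff {K : Type*} [Field K] [DecidableEq K] {n : ℕ} (P : MvPolynomial (Fin n) K)
    (k : Fin n → ℕ) (A : Fin n → Finset K) (hcard : ∀ i, (A i).card = k i + 1)
    (hdeg : P.totalDegree ≤ ∑ i, k i) :
    ∑ g ∈ Fintype.piFinset A, MvPolynomial.eval g P * ∏ i, Lagrange.nodalWeight (A i) id (g i)
      = MvPolynomial.coeff (Finsupp.equivFunOnFinite.symm k) P := by
  have key : ∀ m ∈ P.support,
      ∏ i, (∑ x ∈ A i, x ^ m i * Lagrange.nodalWeight (A i) id x)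
        = if m = Finsupp.equivFunOnFinite.symm k then 1 else 0 := by
    intro m hm
    have hsum : ∑ i, m i ≤ ∑ i, k i := by
      refine le_trans ?_ hdeg
      have := MvPolynomial.le_totalDegree hm
      rwa [Finsupp.sum_fintype _ _ (fun _ => rfl)] at this
    by_cases hlt : ∃ j, m j < k j
    · obtain ⟨j, hj⟩ := hlt
      have h0 : (∑ x ∈ A j, x ^ m j * Lagrange.nodalWeight (A j) id x) = 0 := by
        rw [sum_pow_mul_nodalWeight _ _ (by rw [hcard j]; omega)]
        rw [hcard j]; simp; omega
      rw [Finset.prod_eq_zero (Finset.mem_univ j) h0]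
      have : m ≠ Finsupp.equivFunOnFinite.symm k := by
        intro h; apply absurd hj
        have := congrArg (fun f => f j) (congrArg Finsupp.equivFunOnFinite h)
        simp at this; omega
      simp [this]
    · push_neg at hlt
      have heq : ∀ j, m j = k j := by
        intro j
        by_contra hne
        have h1 : k j < m j := lt_of_le_of_ne (hlt j) (Ne.symm hne)
        have : ∑ i, k i < ∑ i, m i :=
          Finset.sum_lt_sum (fun i _ => hlt i) ⟨j, Finset.mem_univ j, h1⟩
        omega
      have hmk : m = Finsupp.equivFunOnFinite.symm k := by
        apply Finsupp.equivFunOnFinite.injective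
        ext j; simpa using heq j
      rw [if_pos hmk]
      refine Finset.prod_eq_one fun i _ => ?_
      rw [sum_pow_mul_nodalWeight _ _ (by rw [hcard i, heq i]; omega)]
      rw [hcard i, heq i]; simp
  calc ∑ g ∈ Fintype.piFinset A, MvPolynomial.eval g P * ∏ i, Lagrange.nodalWeight (A i) id (g i)
      = ∑ g ∈ Fintype.piFinset A, ∑ m ∈ P.support,
          MvPolynomial.coeff m P * ∏ i, (g i ^ m i * Lagrange.nodalWeight (A i) id (g i)) := by
        refine Finset.sum_congr rfl fun g _ => ?_
        rw [MvPolynomial.eval_eq', Finset.sum_mul]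
        refine Finset.sum_congr rfl fun m _ => ?_
        rw [mul_assoc, Finset.prod_mul_distrib]
    _ = ∑ m ∈ P.support, MvPolynomial.coeff m P * ∑ g ∈ Fintype.piFinset A,
          ∏ i, (g i ^ m i * Lagrange.nodalWeight (A i) id (g i)) := by
        rw [Finset.sum_comm]
        exact Finset.sum_congr rfl fun m _ => by rw [Finset.mul_sum]
    _ = ∑ m ∈ P.support, MvPolynomial.coeff m P *
          ∏ i, (∑ x ∈ A i, x ^ m i * Lagrange.nodalWeight (A i) id x) := by
        refine Finset.sum_congr rfl fun m _ => ?_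
        rw [Finset.prod_univ_sum]
    _ = MvPolynomial.coeff (Finsupp.equivFunOnFinite.symm k) P := by
        rw [Finset.sum_congr rfl fun m hm => by rw [key m hm]]
        simp only [mul_ite, mul_one, mul_zero]
        rw [Finset.sum_ite_eq' P.support (Finsupp.equivFunOnFinite.symm k)
          (fun m => MvPolynomial.coeff m P)]
        split
        · rfl
        · next h => exact (MvPolynomial.notMem_support_iff.mp h).symm

lemma cn_field {K : Type*} [Field K] [DecidableEq K] {n : ℕ} (P : MvPolynomial (Fin n) K)
    (k : Fin n → ℕ) (hdeg : P.totalDegree ≤ ∑ i, k i)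
    (hcoeff : MvPolynomial.coeff (Finsupp.equivFunOnFinite.symm k) P ≠ 0)
    (A : Fin n → Finset K) (hA : ∀ i, (A i).card = k i + 1) :
    ∃ a : Fin n → K, (∀ i, a i ∈ A i) ∧ MvPolynomial.eval a P ≠ 0 := by
  have h := grid_coeff P k A hA hdeg
  rw [← h] at hcoeff
  obtain ⟨g, hg, hne⟩ := Finset.exists_ne_zero_of_sum_ne_zero hcoeff
  exact ⟨g, fun i => (Fintype.mem_piFinset.mp hg) i, fun h0 => hne (by rw [h0, zero_mul])⟩

/-- **Combinatorial Nullstellensatz over an integral domain**. Let `R` be an integral domain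
and `P` a polynomial in `R[x₁,…,xₙ]` whose total degree equals `k₁ + ⋯ + kₙ` and in which the
coefficient of the monomial `x₁^{k₁} ⋯ xₙ^{kₙ}` is nonzero. Then for any finite subsets
`A₁,…,Aₙ` of `R` with `|Aᵢ| ≥ kᵢ + 1`, there are `aᵢ ∈ Aᵢ` with `P(a₁,…,aₙ) ≠ 0`. -/
theorem combinatorial_nullstellensatz_domain
    {R : Type*} [CommRing R] [IsDomain R] {n : ℕ} (P : MvPolynomial (Fin n) R) (k : Fin n → ℕ)
    (hdeg : P.totalDegree = ∑ i, k i)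
    (hcoeff : MvPolynomial.coeff (Finsupp.equivFunOnFinite.symm k) P ≠ 0)
    (A : Fin n → Finset R) (hA : ∀ i, k i + 1 ≤ (A i).card) :
    ∃ a : Fin n → R, (∀ i, a i ∈ A i) ∧ MvPolynomial.eval a P ≠ 0 := by
  classical
  -- shrink each `A i` to exactly `k i + 1` elements
  have hB : ∀ i, ∃ B : Finset R, B ⊆ A i ∧ B.card = k i + 1 :=
    fun i => Finset.exists_subset_card_eq (hA i)
  choose B hBsub hBcard using hB
  -- pass to the fraction field
  let K := FractionRing R
  let φ : R →+* K := algebraMap R K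
  have hφ : Function.Injective φ := IsFractionRing.injective R K
  set Q : MvPolynomial (Fin n) K := MvPolynomial.map φ P with hQ
  have hQdeg : Q.totalDegree ≤ ∑ i, k i := hdeg ▸ Finset.sup_mono (MvPolynomial.support_map_subset φ P)
  have hQcoeff : MvPolynomial.coeff (Finsupp.equivFunOnFinite.symm k) Q ≠ 0 := by
    rw [hQ, MvPolynomial.coeff_map]
    exact fun h => hcoeff (hφ (by rw [h, map_zero]))
  obtain ⟨a', ha'mem, ha'ne⟩ := cn_field Q k hQdeg hQcoeff (fun i => (B i).image φ)
    (fun i => by rw [Finset.card_image_of_injective _ hφ, hBcard i])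
  choose a hamem haeq using fun i => Finset.mem_image.mp (ha'mem i)
  refine ⟨a, fun i => hBsub i (hamem i), fun h0 => ha'ne ?_⟩
  have : a' = φ ∘ a := funext fun i => (haeq i).symm
  rw [this, hQ, MvPolynomial.eval_map]
  have := MvPolynomial.eval₂_comp_left φ (RingHom.id R) a P
  rw [MvPolynomial.eval₂_id, RingHom.comp_id] at this
  rw [← this, h0, map_zero]
end

section
/- Let R be a commutative ring with unity and let P ∈ R[x₁,…,xₙ] be a polynomial. Suppose the total degree of P equals k₁ + k₂ + ⋯ + kₙ, where each kᵢ is a non-negative integer, and suppose the coefficient of the monomial x₁^{k₁} x₂^{k₂} ⋯ xₙ^{kₙ} in P is non-zero. Let A₁,…,Aₙ be finite subsets of R with |Aᵢ| ≥ kᵢ + 1 for all i, such that for each i and any two distinct elements a, b ∈ Aᵢ, the difference a − b is not a zero divisor in R. Then there exist elements a₁ ∈ A₁, …, aₙ ∈ Aₙ such that P(a₁,…,aₙ) ≠ 0. -/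
open MvPolynomial Finset

namespace CNaux

variable {R : Type*} [CommRing R] {n : ℕ}

/-- quotient of `P` upon division by `X i - C a`. -/
noncomputable def qaux (i : Fin n) (a : R) (P : MvPolynomial (Fin n) R) :
    MvPolynomial (Fin n) R :=
  (AddMonoidAlgebra.coeff P).sum fun m c => ∑ j ∈ Finset.range (m i),
    monomial (m.update i j) (c * a ^ (m i - 1 - j))

/-- remainder of `P` upon division by `X i - C a` (all exponents of `x i` are 0). -/
noncomputable def raux (i : Fin n) (a : R) (P : MvPolynomial (Fin n) R) :
    MvPolynomial (Fin n) R :=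
  (AddMonoidAlgebra.coeff P).sum fun m c => monomial (m.update i 0) (c * a ^ (m i))

lemma update_add_single (m : Fin n →₀ ℕ) (i : Fin n) (j : ℕ) :
    m.update i j + Finsupp.single i 1 = m.update i (j + 1) := by
  ext x
  rcases eq_or_ne x i with rfl | hx
  · simp
  · simp [Finsupp.single_apply, hx.symm, Finsupp.update, hx]

lemma telescope (i : Fin n) (a : R) (m : Fin n →₀ ℕ) (c : R) :
    (X i - C a) * (∑ j ∈ Finset.range (m i),
        monomial (m.update i j) (c * a ^ (m i - 1 - j)))
      = monomial m c - monomial (m.update i 0) (c * a ^ (m i)) := by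
  have key : ∀ j ∈ Finset.range (m i),
      (X i - C a) * monomial (m.update i j) (c * a ^ (m i - 1 - j))
        = monomial (m.update i (j + 1)) (c * a ^ (m i - (j + 1)))
          - monomial (m.update i j) (c * a ^ (m i - j)) := by
    intro j hj
    rw [Finset.mem_range] at hj
    rw [sub_mul, X, monomial_mul, C_mul_monomial]
    have hupd : Finsupp.single i 1 + m.update i j = m.update i (j + 1) := by
      rw [add_comm]; exact update_add_single m i j
    rw [hupd]
    have e1 : m i - 1 - j = m i - (j + 1) := by omega
    have e2 : m i - j = (m i - 1 - j) + 1 := by omega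
    congr 1
    · rw [one_mul, e1]
    · rw [e2, pow_succ]
      ring_nf
  rw [Finset.mul_sum, Finset.sum_congr rfl key,
    Finset.sum_range_sub (fun j => monomial (m.update i j) (c * a ^ (m i - j)))]
  simp [Finsupp.update_self]

lemma decomp (i : Fin n) (a : R) (P : MvPolynomial (Fin n) R) :
    P = (X i - C a) * qaux i a P + raux i a P := by
  rw [qaux, raux, Finsupp.sum, Finsupp.sum, Finset.mul_sum, ← Finset.sum_add_distrib]
  conv_lhs => rw [(support_sum_monomial_coeff P).symm]
  refine Finset.sum_congr rfl fun m _ => ?_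
  show (monomial m) (coeff m P)
      = (X i - C a) * (∑ j ∈ Finset.range (m i),
          monomial (m.update i j) (coeff m P * a ^ (m i - 1 - j)))
        + monomial (m.update i 0) (coeff m P * a ^ (m i))
  rw [telescope i a m (coeff m P), sub_add_cancel]

lemma eval_raux_update (i : Fin n) (a : R) (P : MvPolynomial (Fin n) R)
    (b : Fin n → R) (c : R) :
    eval (Function.update b i c) (raux i a P) = eval b (raux i a P) := by
  rw [raux, Finsupp.sum, map_sum, map_sum]
  refine Finset.sum_congr rfl fun m _ => ?_
  rw [eval_monomial, eval_monomial]
  congr 1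
  rw [Finsupp.prod_fintype _ _ (fun _ => pow_zero _),
    Finsupp.prod_fintype _ _ (fun _ => pow_zero _)]
  refine Finset.prod_congr rfl fun x _ => ?_
  rcases eq_or_ne x i with rfl | hx
  · simp [Finsupp.update]
  · simp [Function.update_of_ne hx]

lemma qaux_totalDegree_le (i : Fin n) (a : R) (P : MvPolynomial (Fin n) R) (N : ℕ)
    (h : P.totalDegree ≤ N) : (qaux i a P).totalDegree ≤ N - 1 := by
  rw [qaux, Finsupp.sum]
  refine MvPolynomial.totalDegree_finsetSum_le fun m hm => ?_
  refine MvPolynomial.totalDegree_finsetSum_le fun j hj => ?_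
  refine (totalDegree_monomial_le _ _).trans ?_
  rw [Finset.mem_range] at hj
  have hms : (m.sum fun _ e => e) ≤ N := (MvPolynomial.le_totalDegree hm).trans h
  have h2 : (m.sum fun _ e => e) = ∑ x, m x := Finsupp.sum_fintype _ _ (fun _ => rfl)
  rw [Finsupp.sum_fintype _ _ (fun _ => rfl)]
  simp only [id_eq]
  rw [h2] at hms
  have h3 : ∑ x, (m.update i j) x = j + ∑ x ∈ Finset.univ \ {i}, m x := by
    rw [show ((m.update i j : Fin n →₀ ℕ) : Fin n → ℕ) = Function.update m i j from
      Finsupp.coe_update m i j]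
    rw [Finset.sum_update_of_mem (Finset.mem_univ i)]
  have h4 : ∑ x, m x = m i + ∑ x ∈ Finset.univ \ {i}, m x := by
    rw [Finset.sdiff_singleton_eq_erase]
    exact (Finset.add_sum_erase _ _ (Finset.mem_univ i)).symm
  omega

lemma coeff_qaux (i : Fin n) (a : R) (P : MvPolynomial (Fin n) R) (k : Fin n →₀ ℕ)
    (hki : k i ≠ 0) (hdeg : ∀ m ∈ P.support, ∑ x, m x ≤ ∑ x, k x) :
    coeff (k.update i (k i - 1)) (qaux i a P) = coeff k P := by
  classical
  rw [qaux, Finsupp.sum]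
  have main : ∀ m ∈ P.support,
      coeff (k.update i (k i - 1)) (∑ j ∈ Finset.range (m i),
          monomial (m.update i j) (coeff m P * a ^ (m i - 1 - j)))
        = if m = k then coeff k P else 0 := by
    intro m hm
    rw [MvPolynomial.coeff_sum]
    have hterm : ∀ j ∈ Finset.range (m i),
        coeff (k.update i (k i - 1)) (monomial (m.update i j) (coeff m P * a ^ (m i - 1 - j)))
          = if m = k ∧ j = k i - 1 then coeff k P else 0 := by
      intro j hj
      rw [Finset.mem_range] at hj
      rw [coeff_monomial]
      rcases eq_or_ne (m.update i j) (k.update i (k i - 1)) with heq | hne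
      · -- analyze heq
        have happ : ∀ x, Function.update (⇑m) i j x = Function.update (⇑k) i (k i - 1) x := by
          intro x
          have := DFunLike.congr_fun heq x
          rwa [Finsupp.coe_update, Finsupp.coe_update] at this
        have hij : j = k i - 1 := by
          have := happ i
          simpa using this
        have hoff : ∀ x, x ≠ i → m x = k x := by
          intro x hx
          have := happ x
          rwa [Function.update_of_ne hx, Function.update_of_ne hx] at this
        have hmk : m = k := by
          by_contra hmk
          have hmi : m i ≠ k i := by
            intro h'
            exact hmk (Finsupp.ext fun x => by
              rcases eq_or_ne x i with rfl | hx
              · exact h'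
              · exact hoff x hx)
          have hgt : m i > k i := by omega
          have hs1 : ∑ x, m x = m i + ∑ x ∈ Finset.univ.erase i, m x :=
            (Finset.add_sum_erase _ _ (Finset.mem_univ i)).symm
          have hs2 : ∑ x, k x = k i + ∑ x ∈ Finset.univ.erase i, k x :=
            (Finset.add_sum_erase _ _ (Finset.mem_univ i)).symm
          have hsame : ∑ x ∈ Finset.univ.erase i, m x = ∑ x ∈ Finset.univ.erase i, k x :=
            Finset.sum_congr rfl fun x hx => hoff x (Finset.ne_of_mem_erase hx)
          have := hdeg m hm
          omega
        subst hmk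
        rw [if_pos heq, if_pos ⟨rfl, hij⟩]
        have : m i - 1 - j = 0 := by omega
        rw [this, pow_zero, mul_one]
      · rw [if_neg hne, if_neg]
        rintro ⟨rfl, rfl⟩
        exact hne rfl
    rw [Finset.sum_congr rfl hterm]
    rcases eq_or_ne m k with rfl | hmk
    · have hsimp : ∀ j ∈ Finset.range (m i),
          (if m = m ∧ j = m i - 1 then coeff m P else 0)
            = if j = m i - 1 then coeff m P else 0 := by
        intro j _; simp
      rw [Finset.sum_congr rfl hsimp,
        Finset.sum_ite_eq' (Finset.range (m i)) (m i - 1) (fun _ => coeff m P),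
        if_pos (Finset.mem_range.2 (by omega)), if_pos rfl]
    · simp [hmk]
  rw [MvPolynomial.coeff_sum]
  refine Eq.trans (Finset.sum_congr rfl main) ?_
  rcases em (k ∈ P.support) with hk | hk
  · exact (Finset.sum_eq_single_of_mem k hk (fun m _ hmk => if_neg hmk)).trans (if_pos rfl)
  · rw [Finset.sum_congr rfl (fun m hm =>
      if_neg (fun (h : m = k) => hk (by rw [← h]; exact hm)))]
    rw [Finset.sum_const_zero]
    exact (MvPolynomial.notMem_support_iff.1 hk).symm

lemma key (N : ℕ) : ∀ (P : MvPolynomial (Fin n) R) (k : Fin n →₀ ℕ),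
    (∑ j, k j) = N → P.totalDegree = N → coeff k P ≠ 0 →
    ∀ A : Fin n → Finset R, (∀ i, k i + 1 ≤ (A i).card) →
    (∀ i, ∀ a ∈ A i, ∀ b ∈ A i, a ≠ b → ∀ s : R, (a - b) * s = 0 → s = 0) →
    ∃ a : Fin n → R, (∀ i, a i ∈ A i) ∧ eval a P ≠ 0 := by
  induction N with
  | zero =>
    intro P k hk hP hc A hA _
    have hk0 : k = 0 := by
      ext x
      have hle : k x ≤ ∑ j, k j :=
        Finset.single_le_sum (fun j _ => Nat.zero_le _) (Finset.mem_univ x)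
      simp only [Finsupp.coe_zero, Pi.zero_apply]
      omega
    subst hk0
    have hPC : P = C (coeff 0 P) := by
      ext m
      rcases eq_or_ne m 0 with rfl | hm
      · simp
      · rw [coeff_C, if_neg (Ne.symm hm)]
        by_contra h'
        have hmem : m ∈ P.support := MvPolynomial.mem_support_iff.2 h'
        have := (totalDegree_eq_zero_iff (Fin n) P).1 hP m hmem
        exact hm (Finsupp.ext fun x => this x)
    have hne : ∀ i, ∃ x, x ∈ A i := by
      intro i
      have := hA i
      exact Finset.card_pos.1 (by omega)
    choose a ha using hne
    refine ⟨a, ha, ?_⟩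
    rw [hPC]
    simpa using hc
  | succ N ih =>
    classical
    intro P k hk hP hc A hA hzd
    by_contra hcon
    push_neg at hcon
    -- there is an index with k i ≠ 0
    have hex : ∃ i, k i ≠ 0 := by
      by_contra h'
      push_neg at h'
      simp only [h', Finset.sum_const_zero] at hk
      exact Nat.succ_ne_zero N hk.symm
    obtain ⟨i, hki⟩ := hex
    have hAne : ∃ x, x ∈ A i := Finset.card_pos.1 (by have := hA i; omega)
    obtain ⟨a, haA⟩ := hAne
    set Q := qaux i a P with hQ
    set k' := k.update i (k i - 1) with hk'
    set A' := Function.update A i ((A i).erase a) with hA'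
    have hcoeQ : coeff k' Q = coeff k P := by
      refine coeff_qaux i a P k hki fun m hm => ?_
      have h1 : (m.sum fun _ e => e) ≤ P.totalDegree := MvPolynomial.le_totalDegree hm
      have h2 : (m.sum fun _ e => e) = ∑ x, m x := Finsupp.sum_fintype _ _ (fun _ => rfl)
      omega
    have hk'sum : ∑ j, k' j = N := by
      have h3 : ∑ x, k' x = (k i - 1) + ∑ x ∈ Finset.univ \ {i}, k x := by
        rw [hk', show ((k.update i (k i - 1) : Fin n →₀ ℕ) : Fin n → ℕ)
            = Function.update k i (k i - 1) from Finsupp.coe_update k i (k i - 1)]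
        rw [Finset.sum_update_of_mem (Finset.mem_univ i)]
      have h4 : ∑ x, k x = k i + ∑ x ∈ Finset.univ \ {i}, k x := by
        rw [Finset.sdiff_singleton_eq_erase]
        exact (Finset.add_sum_erase _ _ (Finset.mem_univ i)).symm
      omega
    have hQdeg : Q.totalDegree = N := by
      have hle : Q.totalDegree ≤ N :=
        (qaux_totalDegree_le i a P (N + 1) (le_of_eq hP)).trans (by omega)
      have hge : N ≤ Q.totalDegree := by
        have hmem : k' ∈ Q.support := MvPolynomial.mem_support_iff.2 (by
          rw [hcoeQ]; exact hc)
        have h1 := MvPolynomial.le_totalDegree hmem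
        have h2 : (k'.sum fun _ e => e) = ∑ x, k' x := Finsupp.sum_fintype _ _ (fun _ => rfl)
        omega
      omega
    have hA'card : ∀ j, k' j + 1 ≤ (A' j).card := by
      intro j
      rcases eq_or_ne j i with rfl | hj
      · rw [hA', Function.update_self, Finset.card_erase_of_mem haA]
        have h1 : k' j = k j - 1 := by rw [hk']; simp [Finsupp.update]
        have := hA j
        omega
      · rw [hA', Function.update_of_ne hj]
        have h1 : k' j = k j := by
          rw [hk', Finsupp.coe_update]
          exact Function.update_of_ne hj _ _
        rw [h1]; exact hA j
    have hA'sub : ∀ j, A' j ⊆ A j := by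
      intro j
      rcases eq_or_ne j i with rfl | hj
      · rw [hA', Function.update_self]; exact Finset.erase_subset _ _
      · rw [hA', Function.update_of_ne hj]
    have hzd' : ∀ j, ∀ x ∈ A' j, ∀ y ∈ A' j, x ≠ y → ∀ s : R, (x - y) * s = 0 → s = 0 :=
      fun j x hx y hy => hzd j x (hA'sub j hx) y (hA'sub j hy)
    obtain ⟨b, hbA', hbQ⟩ := ih Q k' hk'sum hQdeg (by rw [hcoeQ]; exact hc) A' hA'card hzd'
    -- now derive eval b Q = 0, contradiction
    have hbA : ∀ j, b j ∈ A j := fun j => hA'sub j (hbA' j)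
    have hbP : eval b P = 0 := hcon b hbA
    have hb'P : eval (Function.update b i a) P = 0 := by
      refine hcon _ fun j => ?_
      rcases eq_or_ne j i with rfl | hj
      · rw [Function.update_self]; exact haA
      · rw [Function.update_of_ne hj]; exact hbA j
    have hdec := decomp i a P
    have hrb : eval b (raux i a P) = 0 := by
      have h1 : eval (Function.update b i a) P
          = eval (Function.update b i a) (raux i a P) := by
        conv_lhs => rw [hdec]
        rw [map_add, map_mul, map_sub, eval_X, eval_C, Function.update_self,
          sub_self, zero_mul, zero_add]
      rw [← eval_raux_update i a P b a, ← h1, hb'P]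
    have hmain : (b i - a) * eval b Q = 0 := by
      have := congrArg (eval b) hdec
      rw [map_add, map_mul, map_sub, eval_X, eval_C, hrb, add_zero] at this
      rw [← this, hbP]
    have hbi : b i ∈ (A i).erase a := by
      have := hbA' i
      rwa [hA', Function.update_self] at this
    exact hbQ (hzd i (b i) (hbA i) a haA (Finset.ne_of_mem_erase hbi) _ hmain)

end CNaux

/-- **Combinatorial Nullstellensatz over a commutative ring with unity**. Let `R` be a
commutative ring with `1` and `P` a polynomial in `R[x₁,…,xₙ]` whose total degree equals
`k₁ + ⋯ + kₙ` and in which the coefficient of the monomial `x₁^{k₁} ⋯ xₙ^{kₙ}` is nonzero.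
Let `A₁,…,Aₙ` be finite subsets of `R` with `|Aᵢ| ≥ kᵢ + 1` such that for any two distinct
elements `a, b ∈ Aᵢ` the difference `a - b` is not a zero divisor in `R` (i.e. there is no
`s ≠ 0` with `(a - b) * s = 0`). Then there are `aᵢ ∈ Aᵢ` with `P(a₁,…,aₙ) ≠ 0`. -/
theorem combinatorial_nullstellensatz_comm_ring
    {R : Type*} [CommRing R] {n : ℕ} (P : MvPolynomial (Fin n) R) (k : Fin n → ℕ)
    (hdeg : P.totalDegree = ∑ i, k i)
    (hcoeff : MvPolynomial.coeff (Finsupp.equivFunOnFinite.symm k) P ≠ 0)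
    (A : Fin n → Finset R) (hA : ∀ i, k i + 1 ≤ (A i).card)
    (hzd : ∀ i, ∀ a ∈ A i, ∀ b ∈ A i, a ≠ b → ¬ ∃ s : R, s ≠ 0 ∧ (a - b) * s = 0) :
    ∃ a : Fin n → R, (∀ i, a i ∈ A i) ∧ MvPolynomial.eval a P ≠ 0 := by
  have hk : ∀ j, (Finsupp.equivFunOnFinite.symm k) j = k j := fun j => rfl
  refine CNaux.key (∑ i, k i) P (Finsupp.equivFunOnFinite.symm k) ?_ hdeg hcoeff A ?_ ?_
  · simp [hk]
  · intro i; rw [hk]; exact hA i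
  · intro i a ha b hb hab s hs
    by_contra hs0
    exact hzd i a ha b hb hab ⟨s, hs0, hs⟩
end

section
/- Let p be a prime and let A and B be two non-empty subsets of ℤ/pℤ. Let C = {x ∈ ℤ/pℤ : x = a + b for some a ∈ A, b ∈ B with a ≠ b}. Then |C| ≥ min(p, |A| + |B| − 3). -/
open Polynomial Finset Lagrange

section Aux

variable {F : Type*} [Field F] [DecidableEq F]

lemma coeff_basis (s : Finset F) {a : F} (ha : a ∈ s) :
    (Lagrange.basis s id a).coeff (s.card - 1) = nodalWeight s id a := by
  rw [basis_eq_prod_sub_inv_mul_nodal_div ha, ← nodal_erase_eq_nodal_div ha, coeff_C_mul]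
  have h1 : (nodal (s.erase a) (id : F → F)).natDegree = s.card - 1 := by
    rw [natDegree_nodal, card_erase_of_mem ha]
  rw [← h1, (nodal_monic).coeff_natDegree, mul_one]

lemma lag_sum (s : Finset F) (i : ℕ) (hi : i < s.card) :
    ∑ a ∈ s, nodalWeight s id a * a ^ i = if i = s.card - 1 then 1 else 0 := by
  have hinj : Set.InjOn (id : F → F) s := Function.injective_id.injOn
  have hdeg : (X ^ i : F[X]).degree < s.card := by
    rw [degree_X_pow]; exact_mod_cast hi
  have h := Lagrange.eq_interpolate (f := (X ^ i : F[X])) hinj hdeg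
  have h2 := congrArg (fun q : F[X] => q.coeff (s.card - 1)) h
  simp only [interpolate_apply, finset_sum_coeff, coeff_C_mul, coeff_X_pow] at h2
  rw [show (if i = s.card - 1 then (1:F) else 0) = if s.card - 1 = i then 1 else 0 by
    simp [eq_comm], h2]
  refine Finset.sum_congr rfl fun a ha => ?_
  rw [coeff_basis s ha]
  simp [mul_comm]

lemma mono_sum (X Y : Finset F) (m n i j : ℕ) (hX : X.card = m + 1) (hY : Y.card = n + 1)
    (hij : i + j ≤ m + n) :
    (∑ a ∈ X, nodalWeight X id a * a ^ i) * (∑ b ∈ Y, nodalWeight Y id b * b ^ j) =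
      if i = m ∧ j = n then 1 else 0 := by
  rcases lt_or_ge j n with hj | hj
  · rw [lag_sum Y j (by omega), hY]
    have : ¬ (j = n + 1 - 1) := by omega
    rw [if_neg this, mul_zero, if_neg (by omega)]
  · have hi : i ≤ m := by omega
    rw [lag_sum X i (by omega), hX]
    rcases eq_or_ne i m with rfl | him
    · have hjn : j = n := by omega
      subst hjn
      rw [if_pos (by omega), one_mul, lag_sum Y j (by omega), hY, if_pos (by omega),
        if_pos ⟨by omega, rfl⟩]
    · rw [if_neg (by omega), zero_mul, if_neg (by tauto)]

lemma pq_sum (X Y : Finset F) (m n i j : ℕ) (hX : X.card = m + 1) (hY : Y.card = n + 1)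
    (hij : i + j ≤ m + n) :
    ∑ a ∈ X, ∑ b ∈ Y, (nodalWeight X id a * nodalWeight Y id b) * (a ^ i * b ^ j) =
      if i = m ∧ j = n then 1 else 0 := by
  rw [← mono_sum X Y m n i j hX hY hij, Finset.sum_mul_sum]
  exact Finset.sum_congr rfl fun a _ => Finset.sum_congr rfl fun b _ => by ring

lemma T_eval (X Y : Finset F) (m n e : ℕ) (hm : 1 ≤ m) (hX : X.card = m + 1)
    (hY : Y.card = n + 1) (he : e + 1 ≤ m + n) :
    ∑ a ∈ X, ∑ b ∈ Y, (nodalWeight X id a * nodalWeight Y id b) * ((a - b) * (a + b) ^ e) =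
      if e + 1 = m + n then (e.choose (m - 1) : F) - (e.choose m : F) else 0 := by
  have step : ∑ a ∈ X, ∑ b ∈ Y, (nodalWeight X id a * nodalWeight Y id b) *
        ((a - b) * (a + b) ^ e) =
      ∑ i ∈ Finset.range (e + 1), (e.choose i : F) *
        ((∑ a ∈ X, ∑ b ∈ Y, (nodalWeight X id a * nodalWeight Y id b) * (a ^ (i+1) * b ^ (e-i)))
        - (∑ a ∈ X, ∑ b ∈ Y, (nodalWeight X id a * nodalWeight Y id b) * (a ^ i * b ^ (e-i+1)))) := by
    have inner : ∀ a b : F, (nodalWeight X id a * nodalWeight Y id b) * ((a - b) * (a + b) ^ e)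
        = ∑ i ∈ Finset.range (e + 1), ((e.choose i : F) *
            ((nodalWeight X id a * nodalWeight Y id b) * (a ^ (i+1) * b ^ (e-i)))
          - (e.choose i : F) *
            ((nodalWeight X id a * nodalWeight Y id b) * (a ^ i * b ^ (e-i+1)))) := by
      intro a b
      rw [add_pow]
      simp only [Finset.mul_sum]
      refine Finset.sum_congr rfl fun i _ => ?_
      ring
    calc ∑ a ∈ X, ∑ b ∈ Y, (nodalWeight X id a * nodalWeight Y id b) * ((a - b) * (a + b) ^ e)
        = ∑ a ∈ X, ∑ b ∈ Y, ∑ i ∈ Finset.range (e + 1), ((e.choose i : F) *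
            ((nodalWeight X id a * nodalWeight Y id b) * (a ^ (i+1) * b ^ (e-i)))
          - (e.choose i : F) *
            ((nodalWeight X id a * nodalWeight Y id b) * (a ^ i * b ^ (e-i+1)))) := by
          exact Finset.sum_congr rfl fun a _ => Finset.sum_congr rfl fun b _ => inner a b
      _ = ∑ i ∈ Finset.range (e + 1), ∑ a ∈ X, ∑ b ∈ Y, ((e.choose i : F) *
            ((nodalWeight X id a * nodalWeight Y id b) * (a ^ (i+1) * b ^ (e-i)))
          - (e.choose i : F) *
            ((nodalWeight X id a * nodalWeight Y id b) * (a ^ i * b ^ (e-i+1)))) := by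
          exact (Finset.sum_congr rfl fun a _ => Finset.sum_comm).trans Finset.sum_comm
      _ = _ := by
          refine Finset.sum_congr rfl fun i _ => ?_
          simp only [Finset.sum_sub_distrib, Finset.mul_sum, mul_sub]
  rw [step]
  rcases eq_or_ne (e + 1) (m + n) with heq | hne
  · rw [if_pos heq]
    have key : ∀ i ∈ Finset.range (e + 1), (e.choose i : F) *
        ((if i + 1 = m ∧ e - i = n then (1:F) else 0) - (if i = m ∧ e - i + 1 = n then (1:F) else 0))
        = (if i = m - 1 then (e.choose i : F) else 0) - (if i = m then (e.choose i : F) else 0) := by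
      intro i hi
      rw [Finset.mem_range] at hi
      rcases eq_or_ne i (m-1) with rfl | h1
      · rw [if_pos rfl, if_pos ⟨by omega, by omega⟩, if_neg (by omega), if_neg (by omega)]
        ring
      · rcases eq_or_ne i m with rfl | h2
        · rw [if_neg (by omega), if_pos rfl, if_pos ⟨rfl, by omega⟩, if_neg (by omega)]
          ring
        · rw [if_neg (by omega), if_neg (by omega), if_neg (by omega), if_neg (by omega)]
          ring
    calc ∑ i ∈ Finset.range (e + 1), (e.choose i : F) *
        ((∑ a ∈ X, ∑ b ∈ Y, (nodalWeight X id a * nodalWeight Y id b) * (a ^ (i+1) * b ^ (e-i)))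
        - (∑ a ∈ X, ∑ b ∈ Y, (nodalWeight X id a * nodalWeight Y id b) * (a ^ i * b ^ (e-i+1))))
        = ∑ i ∈ Finset.range (e + 1),
          ((if i = m - 1 then (e.choose i : F) else 0) - (if i = m then (e.choose i : F) else 0)) := by
          refine Finset.sum_congr rfl fun i hi => ?_
          rw [Finset.mem_range] at hi
          rw [pq_sum X Y m n (i+1) (e-i) hX hY (by omega),
            pq_sum X Y m n i (e-i+1) hX hY (by omega)]
          exact key i (Finset.mem_range.mpr hi)
      _ = (e.choose (m-1) : F) - (e.choose m : F) := by
          rw [Finset.sum_sub_distrib, Finset.sum_ite_eq' (Finset.range (e+1)) (m-1),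
            Finset.sum_ite_eq' (Finset.range (e+1)) m,
            if_pos (Finset.mem_range.mpr (by omega))]
          rcases le_or_gt m e with h | h
          · rw [if_pos (Finset.mem_range.mpr (by omega))]
          · rw [if_neg (by simp [Finset.mem_range]; omega),
              Nat.choose_eq_zero_of_lt h, Nat.cast_zero]
  · rw [if_neg hne]
    refine Finset.sum_eq_zero fun i hi => ?_
    rw [Finset.mem_range] at hi
    rw [pq_sum X Y m n (i+1) (e-i) hX hY (by omega),
      pq_sum X Y m n i (e-i+1) hX hY (by omega),
      if_neg (by omega), if_neg (by omega), sub_zero, mul_zero]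

lemma choose_row_ne_zero {p k j : ℕ} (hp : p.Prime) (hk : k < p) (hj : j ≤ k) :
    (k.choose j : ZMod p) ≠ 0 := by
  haveI := Fact.mk hp
  have hdvd : ¬ p ∣ k.choose j := by
    intro hd
    have h1 : k.choose j * (j.factorial * (k - j).factorial) = k.factorial := by
      rw [← mul_assoc]; exact Nat.choose_mul_factorial_mul_factorial hj
    have : p ∣ k.factorial := h1 ▸ hd.mul_right _
    exact absurd ((Nat.Prime.dvd_factorial hp).mp this) (by omega)
  simpa [ZMod.natCast_eq_zero_iff] using hdvd

lemma choose_diff_ne_zero {p k m n : ℕ} (hp : p.Prime) (hm : 1 ≤ m) (hk : k + 1 = m + n)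
    (hkp : k < p) (hmn : m ≠ n) :
    (k.choose (m - 1) : ZMod p) - (k.choose m : ZMod p) ≠ 0 := by
  haveI := Fact.mk hp
  rcases le_or_gt m k with hmk | hmk
  · intro h
    have hv : (k.choose (m-1) : ZMod p) = (k.choose m : ZMod p) := by
      linear_combination h
    have hid : k.choose m * m = k.choose (m-1) * n := by
      have := Nat.choose_succ_right_eq k (m - 1)
      rw [show m - 1 + 1 = m by omega, show k - (m-1) = n by omega] at this
      exact this
    have hcast : (k.choose m : ZMod p) * m = (k.choose m : ZMod p) * n := by
      have := congrArg (fun t : ℕ => (t : ZMod p)) hid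
      push_cast at this
      rw [← hv] at this ⊢
      exact this
    have hne := choose_row_ne_zero hp hkp hmk
    have hmn' : (m : ZMod p) = n := mul_left_cancel₀ hne hcast
    have : m % p = n % p := by
      have := (ZMod.natCast_eq_natCast_iff m n p).mp hmn'
      exact this
    rw [Nat.mod_eq_of_lt (by omega), Nat.mod_eq_of_lt (by omega)] at this
    exact hmn this
  · have h1 : k.choose m = 0 := Nat.choose_eq_zero_of_lt hmk
    have h2 : m - 1 = k := by omega
    rw [h1, h2, Nat.choose_self]
    simpa using one_ne_zero' (ZMod p)


end Aux

lemma eh_key {p : ℕ} (hp : p.Prime) (X Y D : Finset (ZMod p)) (m n : ℕ)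
    (hm : 1 ≤ m) (hX : X.card = m + 1) (hY : Y.card = n + 1)
    (hD : D.card + 1 = m + n) (hDp : D.card < p) (hmn : m ≠ n)
    (hsum : ∀ a ∈ X, ∀ b ∈ Y, a ≠ b → a + b ∈ D) : False := by
  haveI := Fact.mk hp
  have hzero : ∑ a ∈ X, ∑ b ∈ Y,
      (nodalWeight X id a * nodalWeight Y id b) * ((a - b) * ∏ c ∈ D, (a + b - c)) = 0 := by
    refine Finset.sum_eq_zero fun a ha => Finset.sum_eq_zero fun b hb => ?_
    rcases eq_or_ne a b with rfl | hab
    · simp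
    · rw [Finset.prod_eq_zero (hsum a ha b hb hab) (sub_self _)]
      ring
  have hprod : ∀ a b : ZMod p, (∏ c ∈ D, (a + b - c)) =
      ∑ t ∈ D.powerset, (∏ c ∈ t, (-c)) * (a + b) ^ (D.card - t.card) := by
    intro a b
    rw [show (∏ c ∈ D, (a + b - c)) = ∏ c ∈ D, ((-c) + (a + b)) from
      Finset.prod_congr rfl fun c _ => by ring, Finset.prod_add]
    refine Finset.sum_congr rfl fun t ht => ?_
    rw [Finset.prod_const, Finset.card_sdiff_of_subset (Finset.mem_powerset.mp ht)]
  have hval : ∑ a ∈ X, ∑ b ∈ Y,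
      (nodalWeight X id a * nodalWeight Y id b) * ((a - b) * ∏ c ∈ D, (a + b - c)) =
      (D.card.choose (m - 1) : ZMod p) - (D.card.choose m : ZMod p) := by
    calc ∑ a ∈ X, ∑ b ∈ Y,
        (nodalWeight X id a * nodalWeight Y id b) * ((a - b) * ∏ c ∈ D, (a + b - c))
        = ∑ a ∈ X, ∑ b ∈ Y, ∑ t ∈ D.powerset, (∏ c ∈ t, (-c)) *
            ((nodalWeight X id a * nodalWeight Y id b) *
              ((a - b) * (a + b) ^ (D.card - t.card))) := by
          refine Finset.sum_congr rfl fun a _ => Finset.sum_congr rfl fun b _ => ?_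
          rw [hprod a b]
          simp only [Finset.mul_sum]
          exact Finset.sum_congr rfl fun t _ => by ring
      _ = ∑ t ∈ D.powerset, ∑ a ∈ X, ∑ b ∈ Y, (∏ c ∈ t, (-c)) *
            ((nodalWeight X id a * nodalWeight Y id b) *
              ((a - b) * (a + b) ^ (D.card - t.card))) := by
          exact (Finset.sum_congr rfl fun a _ => Finset.sum_comm).trans Finset.sum_comm
      _ = ∑ t ∈ D.powerset, (∏ c ∈ t, (-c)) *
            ∑ a ∈ X, ∑ b ∈ Y, ((nodalWeight X id a * nodalWeight Y id b) *
              ((a - b) * (a + b) ^ (D.card - t.card))) := by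
          refine Finset.sum_congr rfl fun t _ => ?_
          simp only [Finset.mul_sum]
      _ = (D.card.choose (m - 1) : ZMod p) - (D.card.choose m : ZMod p) := by
          rw [Finset.sum_eq_single_of_mem ∅ (Finset.empty_mem_powerset D)]
          · rw [Finset.prod_empty, one_mul, Finset.card_empty, Nat.sub_zero,
              T_eval X Y m n D.card hm hX hY (by omega), if_pos (by omega)]
          · intro t ht hne
            have htc : 1 ≤ t.card := Finset.card_pos.mpr (Finset.nonempty_iff_ne_empty.mpr hne)
            have htD : t.card ≤ D.card := Finset.card_le_card (Finset.mem_powerset.mp ht)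
            rw [T_eval X Y m n (D.card - t.card) hm hX hY (by omega), if_neg (by omega), mul_zero]
  rw [hzero] at hval
  exact choose_diff_ne_zero hp hm hD hDp hmn hval.symm

/-- **Erdős–Heilbronn conjecture**. Let `p` be a prime and `A`, `B` two non-empty subsets of
`ℤ/pℤ`. Let `C = {x : x = a + b for some a ∈ A, b ∈ B, a ≠ b}` be the restricted sumset.
Then `|C| ≥ min (p, |A| + |B| - 3)`. -/
theorem erdos_heilbronn {p : ℕ} (hp : p.Prime) (A B C : Finset (ZMod p))
    (hA : A.Nonempty) (hB : B.Nonempty)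
    (hC : ∀ x : ZMod p, x ∈ C ↔ ∃ a ∈ A, ∃ b ∈ B, a ≠ b ∧ x = a + b) :
    min (p : ℤ) ((A.card : ℤ) + (B.card : ℤ) - 3) ≤ (C.card : ℤ) := by
  by_contra hcon
  push_neg at hcon
  have hCp : C.card < p := by
    have := lt_of_lt_of_le hcon (min_le_left (p : ℤ) _)
    exact_mod_cast this
  have hCab : C.card + 4 ≤ A.card + B.card := by
    have := lt_of_lt_of_le hcon (min_le_right (p : ℤ) _)
    push_cast at this
    omega
  by_cases hA1 : A.card = 1
  · obtain ⟨a, rfl⟩ := Finset.card_eq_one.mp hA1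
    have hsub : (B.erase a).image (a + ·) ⊆ C := by
      intro x hx
      obtain ⟨b, hb, rfl⟩ := Finset.mem_image.mp hx
      rw [Finset.mem_erase] at hb
      exact (hC _).mpr ⟨a, Finset.mem_singleton_self a, b, hb.2, fun h => hb.1 h.symm, rfl⟩
    have h2 : B.card - 1 ≤ C.card := by
      calc B.card - 1 ≤ (B.erase a).card := Finset.pred_card_le_card_erase
        _ = ((B.erase a).image (a + ·)).card :=
            (Finset.card_image_of_injective _ (add_right_injective a)).symm
        _ ≤ C.card := Finset.card_le_card hsub
    have hBpos := Finset.card_pos.mpr hB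
    omega
  by_cases hB1 : B.card = 1
  · obtain ⟨b, rfl⟩ := Finset.card_eq_one.mp hB1
    have hsub : (A.erase b).image (· + b) ⊆ C := by
      intro x hx
      obtain ⟨a, ha, rfl⟩ := Finset.mem_image.mp hx
      rw [Finset.mem_erase] at ha
      exact (hC _).mpr ⟨a, ha.2, b, Finset.mem_singleton_self b, ha.1, rfl⟩
    have h2 : A.card - 1 ≤ C.card := by
      calc A.card - 1 ≤ (A.erase b).card := Finset.pred_card_le_card_erase
        _ = ((A.erase b).image (· + b)).card :=
            (Finset.card_image_of_injective _ (add_left_injective b)).symm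
        _ ≤ C.card := Finset.card_le_card hsub
    have hApos := Finset.card_pos.mpr hA
    omega
  have hA2 : 2 ≤ A.card := by have := Finset.card_pos.mpr hA; omega
  have hB2 : 2 ≤ B.card := by have := Finset.card_pos.mpr hB; omega
  set s := C.card + 4 with hs
  set kA : ℕ := min A.card (s - 2) with hkA
  have hkAcases := min_choice A.card (s - 2)
  have hkA1 : kA ≤ A.card := min_le_left _ _
  have hkA2 : kA ≤ s - 2 := min_le_right _ _
  have hkA3 : 2 ≤ kA := le_min hA2 (by omega)
  set kB : ℕ := s - kA with hkB
  have hkB1 : kB ≤ B.card := by omega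
  have hkB2 : 2 ≤ kB := by omega
  have hsum' : kA + kB = C.card + 4 := by omega
  obtain ⟨A', hA'sub, hA'card⟩ := Finset.exists_subset_card_eq hkA1
  obtain ⟨B', hB'sub, hB'card⟩ := Finset.exists_subset_card_eq hkB1
  by_cases horient : kB = kA + 1
  · obtain ⟨Y, hYsub, hYcard⟩ := Finset.exists_subset_card_eq (show kA - 1 ≤ A'.card by omega)
    refine eh_key hp B' Y C (kB - 1) (kA - 2) (by omega) (by omega) (by omega)
      (by omega) hCp (by omega) ?_
    intro a ha b hb hab
    exact (hC _).mpr ⟨b, hA'sub (hYsub hb), a, hB'sub ha, fun h => hab h.symm, (add_comm a b)⟩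
  · obtain ⟨Y, hYsub, hYcard⟩ := Finset.exists_subset_card_eq (show kB - 1 ≤ B'.card by omega)
    refine eh_key hp A' Y C (kA - 1) (kB - 2) (by omega) (by omega) (by omega)
      (by omega) hCp (by omega) ?_
    intro a ha b hb hab
    exact (hC _).mpr ⟨a, hA'sub ha, b, hB'sub (hYsub hb), hab, rfl⟩
end

section
/- Let p be a prime with p > 2 and let A and B be subsets of ℤ/pℤ such that |A| + |B| − 3 ≥ p. Let C = {x ∈ ℤ/pℤ : x = a + b for some a ∈ A, b ∈ B with a ≠ b}. Then C = ℤ/pℤ. -/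
/-- Let `p > 2` be a prime and `A`, `B` subsets of `ℤ/pℤ` with `|A| + |B| - 3 ≥ p`. Then the
restricted sumset `C = {x : x = a + b for some a ∈ A, b ∈ B, a ≠ b}` is all of `ℤ/pℤ`. -/
theorem restricted_sumset_eq_univ {p : ℕ} (hp : p.Prime) (hp2 : 2 < p)
    (A B C : Finset (ZMod p))
    (hcard : (p : ℤ) ≤ (A.card : ℤ) + (B.card : ℤ) - 3)
    (hC : ∀ x : ZMod p, x ∈ C ↔ ∃ a ∈ A, ∃ b ∈ B, a ≠ b ∧ x = a + b) :
    ∀ x : ZMod p, x ∈ C := by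
  haveI : Fact p.Prime := ⟨hp⟩
  intro x
  rw [hC]
  set T : Finset (ZMod p) := B.image (fun b => x - b) with hT
  have hTcard : T.card = B.card := by
    apply Finset.card_image_of_injective
    intro a b h
    simpa using h
  -- |A ∩ T| ≥ |A| + |B| - p ≥ 3
  have hunion : (A ∪ T).card ≤ p := by
    simpa [ZMod.card] using (A ∪ T).card_le_univ
  have hinter : 3 ≤ (A ∩ T).card := by
    have h1 := Finset.card_inter_add_card_union A T
    rw [hTcard] at h1
    omega
  -- at most one element a of A ∩ T has a + a = x
  set S := (A ∩ T).filter (fun a => a + a ≠ x) with hS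
  have hbad : ((A ∩ T).filter (fun a => a + a = x)).card ≤ 1 := by
    apply Finset.card_le_one.2
    intro a ha b hb
    have ha' := (Finset.mem_filter.1 ha).2
    have hb' := (Finset.mem_filter.1 hb).2
    have h2 : (2 : ZMod p) * a = 2 * b := by rw [two_mul, two_mul, ha', hb']
    have h2ne : (2 : ZMod p) ≠ 0 := by
      have : ((2 : ℕ) : ZMod p) ≠ 0 := by
        rw [Ne, ZMod.natCast_eq_zero_iff]
        intro h
        have := Nat.le_of_dvd (by norm_num) h
        omega
      simpa using this
    exact mul_left_cancel₀ h2ne h2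
  have hScard : 1 ≤ S.card := by
    have := Finset.card_filter_add_card_filter_not
      (s := A ∩ T) (p := fun a => a + a = x)
    have : ((A ∩ T).filter (fun a => a + a = x)).card + S.card = (A ∩ T).card := by
      simpa [hS] using this
    omega
  have hS1 : 0 < S.card := by omega
  obtain ⟨a, haS⟩ := Finset.card_pos.1 hS1
  rw [hS, Finset.mem_filter, Finset.mem_inter] at haS
  obtain ⟨⟨haA, haT⟩, hax⟩ := haS
  rw [hT, Finset.mem_image] at haT
  obtain ⟨b, hbB, hba⟩ := haT
  refine ⟨a, haA, b, hbB, ?_, ?_⟩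
  · intro h; apply hax; linear_combination -hba + h
  · linear_combination hba
end
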